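/- Let κ be a regular uncountable cardinal. Then the poset Sacks(κ) is <κ-directed closed: every directed subset D ⊆ Sacks(κ) with |D| < κ has a lower bound in Sacks(κ); indeed, if D is nonempty then ⋂D ∈ Sacks(κ). -/

import Mathlib

/-!
STATEMENT 7: If `T ∈ Sacks(κ)` and `f` is a cofinal branch through `T`, then the set of
`α < κ` such that `f↾α` splits in `T` is closed and unbounded in `κ`.
-/

universe u

namespace Stmt8

/-- A node of the tree `2^{<κ}`: a function `s : β → 2` for some ordinal `β`. -/
abbrev BNode : Type (u + 1) :=
  (β : Ordinal.{u}) × ({γ : Ordinal.{u} // γ < β} → Bool)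

/-- The restriction `s↾α` of a node `s` to some `α ≤ dom s`. -/
def nrestrict (s : BNode.{u}) (α : Ordinal.{u}) (h : α ≤ s.1) : BNode.{u} :=
  ⟨α, fun γ => s.2 ⟨γ.1, lt_of_lt_of_le γ.2 h⟩⟩

/-- The one-step extension `s⌢b` of a node `s`. -/
noncomputable def extOne (s : BNode.{u}) (b : Bool) : BNode.{u} :=
  ⟨s.1 + 1, fun γ => if h : γ.1 < s.1 then s.2 ⟨γ.1, h⟩ else b⟩

/-- `s` splits in `T`: both one-step extensions of `s` lie in `T`. -/
def Splits (T : Set BNode.{u}) (s : BNode.{u}) : Prop :=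
  extOne s false ∈ T ∧ extOne s true ∈ T

/-- `T` is a subtree of `2^{<κ}`: nonempty, consisting of nodes of length `< κ`,
and closed under restrictions. -/
def IsSubtree (κ : Cardinal.{u}) (T : Set BNode.{u}) : Prop :=
  T.Nonempty ∧ (∀ s ∈ T, s.1 < κ.ord) ∧
  ∀ s ∈ T, ∀ α : Ordinal.{u}, ∀ h : α ≤ s.1, nrestrict s α h ∈ T

/-- `T` is a condition of Kanamori's forcing `Sacks(κ)`. -/
def IsSacks (κ : Cardinal.{u}) (T : Set BNode.{u}) : Prop :=
  IsSubtree κ T ∧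
  (∀ s : BNode.{u}, s.1 < κ.ord → Order.IsSuccLimit s.1 →
    (∀ β : Ordinal.{u}, ∀ h : β < s.1, nrestrict s β h.le ∈ T) → s ∈ T) ∧
  (∀ s ∈ T, ∃ t ∈ T, ∃ h : s.1 ≤ t.1, nrestrict t s.1 h = s ∧ Splits T t) ∧
  (∀ s ∈ T, Order.IsSuccLimit s.1 →
    (∀ β : Ordinal.{u}, β < s.1 → ∃ γ : Ordinal.{u}, β ≤ γ ∧ ∃ h : γ < s.1,
      Splits T (nrestrict s γ h.le)) →
    Splits T s)

/-- The restriction `f↾α` of a branch `f : κ → 2` to an ordinal `α ≤ κ`. -/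
def brestrict (κ : Cardinal.{u}) (f : {γ : Ordinal.{u} // γ < κ.ord} → Bool)
    (α : Ordinal.{u}) (h : α ≤ κ.ord) : BNode.{u} :=
  ⟨α, fun γ => f ⟨γ.1, lt_of_lt_of_le γ.2 h⟩⟩

/-- For `κ` regular uncountable, `Sacks(κ)` is `<κ`-directed closed:
every directed `D ⊆ Sacks(κ)` with `|D| < κ` has a lower bound in `Sacks(κ)`; indeed,
if `D` is nonempty then `⋂D ∈ Sacks(κ)`. -/
lemma bnode_ext {s t : BNode.{u}} (h1 : s.1 = t.1)
    (h2 : ∀ γ (hγ : γ < s.1) (hγ' : γ < t.1), s.2 ⟨γ, hγ⟩ = t.2 ⟨γ, hγ'⟩) : s = t := by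
  obtain ⟨a, f⟩ := s; obtain ⟨b, g⟩ := t
  dsimp at h1; subst h1
  exact congrArg (Sigma.mk a) (funext fun γ => h2 γ.1 γ.2 γ.2)

def Ext (s t : BNode.{u}) : Prop :=
  s.1 ≤ t.1 ∧ ∀ γ (hγ : γ < s.1) (hγ' : γ < t.1), s.2 ⟨γ, hγ⟩ = t.2 ⟨γ, hγ'⟩

lemma ext_refl (s : BNode.{u}) : Ext s s := ⟨le_rfl, fun _ _ _ => rfl⟩

lemma ext_trans {s t u : BNode.{u}} (h1 : Ext s t) (h2 : Ext t u) : Ext s u :=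
  ⟨h1.1.trans h2.1, fun γ hγ hγ' =>
    (h1.2 γ hγ (lt_of_lt_of_le hγ h1.1)).trans (h2.2 γ _ hγ')⟩

lemma ext_nrestrict (t : BNode.{u}) (α : Ordinal.{u}) (h : α ≤ t.1) :
    Ext (nrestrict t α h) t := ⟨h, fun _ _ _ => rfl⟩

lemma nrestrict_eq_of_ext {s t : BNode.{u}} (h : Ext s t) : nrestrict t s.1 h.1 = s :=
  bnode_ext rfl (fun γ hγ hγ' => (h.2 γ hγ' (lt_of_lt_of_le hγ' h.1)).symm)

lemma nrestrict_self (s : BNode.{u}) : nrestrict s s.1 le_rfl = s :=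
  nrestrict_eq_of_ext (ext_refl s)

lemma val_congr {s t : BNode.{u}} (h : s = t) (γ : Ordinal.{u}) (hγ : γ < s.1)
    (hγ' : γ < t.1) : s.2 ⟨γ, hγ⟩ = t.2 ⟨γ, hγ'⟩ := by subst h; rfl

lemma ext_of_nrestrict_eq {s t : BNode.{u}} {h : s.1 ≤ t.1}
    (he : nrestrict t s.1 h = s) : Ext s t :=
  ⟨h, fun γ hγ _ => val_congr he.symm γ hγ hγ⟩

lemma ext_antisymm_len {s t : BNode.{u}} (h : Ext s t) (hl : t.1 ≤ s.1) : s = t :=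
  bnode_ext (le_antisymm h.1 hl) h.2

lemma mem_of_ext {κ : Cardinal.{u}} {T : Set BNode.{u}} (hT : IsSubtree κ T)
    {s t : BNode.{u}} (ht : t ∈ T) (hst : Ext s t) : s ∈ T := by
  have := hT.2.2 t ht s.1 hst.1
  rwa [nrestrict_eq_of_ext hst] at this

lemma extOne_nrestrict (t : BNode.{u}) (γ : Ordinal.{u}) (h : γ < t.1) :
    extOne (nrestrict t γ h.le) (t.2 ⟨γ, h⟩) =
      nrestrict t (γ + 1)
        (by rw [Ordinal.add_one_eq_succ]; exact Order.succ_le_of_lt h) := by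
  refine bnode_ext rfl (fun δ hδ hδ' => ?_)
  show (if hd : δ < γ then t.2 ⟨δ, lt_of_lt_of_le hd h.le⟩ else t.2 ⟨γ, h⟩) = _
  split_ifs with hd
  · rfl
  · have hδγ : δ = γ := by
      have : δ < Order.succ γ := by rwa [← Ordinal.add_one_eq_succ]
      exact le_antisymm (Order.lt_succ_iff.mp this) (not_lt.mp hd)
    cases hδγ; rfl

lemma bot_mem {κ : Cardinal.{u}} {T : Set BNode.{u}} (hT : IsSubtree κ T) :
    (⟨0, fun _ => false⟩ : BNode.{u}) ∈ T := by
  obtain ⟨s, hs⟩ := hT.1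
  have h := hT.2.2 s hs 0 zero_le
  have e : nrestrict s 0 zero_le = (⟨0, fun _ => false⟩ : BNode.{u}) :=
    bnode_ext rfl (fun γ hγ _ => absurd hγ not_lt_zero)
  rwa [e] at h

lemma splits_of_diff {κ : Cardinal.{u}} {T : Set BNode.{u}} (hT : IsSubtree κ T)
    {t1 t2 : BNode.{u}} (h1 : t1 ∈ T) (h2 : t2 ∈ T)
    {γ : Ordinal.{u}} (hγ1 : γ < t1.1) (hγ2 : γ < t2.1)
    (hagree : ∀ δ (hδ : δ < γ) (hδ1 : δ < t1.1) (hδ2 : δ < t2.1),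
      t1.2 ⟨δ, hδ1⟩ = t2.2 ⟨δ, hδ2⟩)
    (hdiff : t1.2 ⟨γ, hγ1⟩ ≠ t2.2 ⟨γ, hγ2⟩) :
    Splits T (nrestrict t1 γ hγ1.le) := by
  have hre : nrestrict t1 γ hγ1.le = nrestrict t2 γ hγ2.le :=
    bnode_ext rfl (fun δ hδ hδ' => hagree δ hδ _ _)
  have e1 : extOne (nrestrict t1 γ hγ1.le) (t1.2 ⟨γ, hγ1⟩) ∈ T := by
    rw [extOne_nrestrict t1 γ hγ1]; exact hT.2.2 t1 h1 _ _
  have e2 : extOne (nrestrict t1 γ hγ1.le) (t2.2 ⟨γ, hγ2⟩) ∈ T := by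
    rw [hre, extOne_nrestrict t2 γ hγ2]; exact hT.2.2 t2 h2 _ _
  cases hb1 : t1.2 ⟨γ, hγ1⟩ <;> cases hb2 : t2.2 ⟨γ, hγ2⟩
  case false.false => exact absurd (hb1.trans hb2.symm) hdiff
  case false.true => rw [hb1] at e1; rw [hb2] at e2; exact ⟨e1, e2⟩
  case true.false => rw [hb1] at e1; rw [hb2] at e2; exact ⟨e2, e1⟩
  case true.true => exact absurd (hb1.trans hb2.symm) hdiff

lemma exists_minSplit {κ : Cardinal.{u}} {T : Set BNode.{u}} (hT : IsSacks κ T)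
    {s : BNode.{u}} (hs : s ∈ T) :
    ∃ t ∈ T, Ext s t ∧ Splits T t ∧
      ∀ t' ∈ T, Ext s t' → Splits T t' → Ext t t' := by
  set A : Set Ordinal.{u} := {γ | ∃ t ∈ T, t.1 = γ ∧ Ext s t ∧ Splits T t} with hA
  have hAne : A.Nonempty := by
    obtain ⟨t, ht, hle, he, hsp⟩ := hT.2.2.1 s hs
    exact ⟨t.1, t, ht, rfl, ext_of_nrestrict_eq he, hsp⟩
  obtain ⟨t, ht, htlen, hext, hsp⟩ := csInf_mem hAne
  refine ⟨t, ht, hext, hsp, ?_⟩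
  intro t' ht' hext' hsp'
  have hlen : t.1 ≤ t'.1 := htlen ▸ csInf_le' ⟨t', ht', rfl, hext', hsp'⟩
  -- suppose they differ somewhere below t.1
  by_cases hB : ∃ δ, ∃ (hδ1 : δ < t.1) (hδ2 : δ < t'.1), t.2 ⟨δ, hδ1⟩ ≠ t'.2 ⟨δ, hδ2⟩
  · exfalso
    set B : Set Ordinal.{u} :=
      {δ | ∃ (hδ1 : δ < t.1) (hδ2 : δ < t'.1), t.2 ⟨δ, hδ1⟩ ≠ t'.2 ⟨δ, hδ2⟩} with hBdef
    have hBne : B.Nonempty := hB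
    obtain ⟨hδ1, hδ2, hne⟩ := csInf_mem hBne
    set δ0 := sInf B
    have hagree : ∀ δ (hδ : δ < δ0) (h1 : δ < t.1) (h2 : δ < t'.1),
        t.2 ⟨δ, h1⟩ = t'.2 ⟨δ, h2⟩ := by
      intro δ hδ h1 h2
      by_contra hne'
      exact notMem_of_lt_csInf' hδ ⟨h1, h2, hne'⟩
    -- δ0 ≥ s.1
    have hs0 : s.1 ≤ δ0 := by
      by_contra hlt
      push_neg at hlt
      exact hne ((hext.2 δ0 hlt hδ1).symm.trans (hext'.2 δ0 hlt hδ2))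
    have hsplit0 : Splits T (nrestrict t δ0 hδ1.le) :=
      splits_of_diff hT.1 ht ht' hδ1 hδ2 hagree hne
    have hmem0 : nrestrict t δ0 hδ1.le ∈ T := hT.1.2.2 t ht δ0 hδ1.le
    have hext0 : Ext s (nrestrict t δ0 hδ1.le) :=
      ⟨hs0, fun γ hγ hγ' => hext.2 γ hγ _⟩
    have : sInf A ≤ δ0 := csInf_le' ⟨nrestrict t δ0 hδ1.le, hmem0, rfl, hext0, hsplit0⟩
    rw [htlen] at hδ1
    exact absurd hδ1 (not_lt.mpr this)
  · push_neg at hB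
    exact ⟨hlen, fun γ hγ hγ' => hB γ hγ hγ'⟩


set_option maxHeartbeats 1000000 in
lemma isSacks_full (κ : Cardinal.{u}) (hκ : Cardinal.aleph0 ≤ κ) :
    IsSacks κ {s : BNode.{u} | s.1 < κ.ord} := by
  have hord : Order.IsSuccLimit κ.ord := Cardinal.isSuccLimit_ord hκ
  have hsucc : ∀ o : Ordinal.{u}, o < κ.ord → o + 1 < κ.ord := fun o ho => by
    rw [Ordinal.add_one_eq_succ]; exact hord.succ_lt ho
  refine ⟨⟨⟨⟨0, fun _ => false⟩, pos_iff_ne_zero.mpr (Ordinal.isSuccLimit_iff.mp hord).1⟩, fun s hs => hs,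
      fun s hs α h => lt_of_le_of_lt h hs⟩, fun s h _ _ => h, ?_, ?_⟩
  · intro u hu
    exact ⟨u, hu, le_rfl, nrestrict_self u, hsucc _ hu, hsucc _ hu⟩
  · intro u hu _ _
    exact ⟨hsucc _ hu, hsucc _ hu⟩

set_option maxHeartbeats 1000000 in
lemma isSacks_sInter (κ : Cardinal.{u}) (hreg : κ.IsRegular)
    (D : Set (Set BNode.{u}))
    (hD : ∀ T ∈ D, IsSacks κ T)
    (hdir : ∀ T₁ ∈ D, ∀ T₂ ∈ D, ∃ T ∈ D, T ⊆ T₁ ∧ T ⊆ T₂)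
    (hcard : Cardinal.mk D < Cardinal.lift.{u + 1} κ)
    (hDne : D.Nonempty) : IsSacks κ (⋂₀ D) := by
  obtain ⟨T0, hT0D⟩ := hDne
  have hsub : ∀ S ∈ D, ⋂₀ D ⊆ S := fun S hS => Set.sInter_subset_of_mem hS
  refine ⟨⟨⟨⟨0, fun _ => false⟩,
      Set.mem_sInter.mpr fun T hT => bot_mem (hD T hT).1⟩, ?_, ?_⟩, ?_, ?_, ?_⟩
  · intro u hu
    exact (hD T0 hT0D).1.2.1 u (Set.mem_sInter.mp hu T0 hT0D)
  · intro u hu β hβ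
    exact Set.mem_sInter.mpr fun T hT =>
      (hD T hT).1.2.2 u (Set.mem_sInter.mp hu T hT) β hβ
  · -- limit closure
    intro u h1 h2 h3
    exact Set.mem_sInter.mpr fun T hT =>
      (hD T hT).2.1 u h1 h2 (fun β hβ => Set.mem_sInter.mp (h3 β hβ) T hT)
  · -- splitting extension: the main point
    intro s hs
    have hsT : ∀ T : D, s ∈ (T : Set BNode.{u}) := fun T => Set.mem_sInter.mp hs T T.2
    have hmin : ∀ T : D, ∃ t ∈ (T : Set BNode.{u}), Ext s t ∧
        Splits (T : Set BNode.{u}) t ∧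
        ∀ t' ∈ (T : Set BNode.{u}), Ext s t' → Splits (T : Set BNode.{u}) t' → Ext t t' :=
      fun T => exists_minSplit (hD T T.2) (hsT T)
    choose t ht hext hsp hmin2 using hmin
    have chain : ∀ T S : D, (S : Set BNode.{u}) ⊆ (T : Set BNode.{u}) →
        Ext (t T) (t S) := fun T S hTS =>
      hmin2 T (t S) (hTS (ht S)) (hext S) ⟨hTS (hsp S).1, hTS (hsp S).2⟩
    have hcomp : ∀ T S : D, ∃ R : D, Ext (t T) (t R) ∧ Ext (t S) (t R) ∧
        (R : Set BNode.{u}) ⊆ (T : Set BNode.{u}) ∧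
        (R : Set BNode.{u}) ⊆ (S : Set BNode.{u}) := by
      intro T S
      obtain ⟨R, hR, h1, h2⟩ := hdir T T.2 S S.2
      exact ⟨⟨R, hR⟩, chain T ⟨R, hR⟩ h1, chain S ⟨R, hR⟩ h2, h1, h2⟩
    have hvals : ∀ (T S : D) (γ : Ordinal.{u}) (h : γ < (t T).1) (h' : γ < (t S).1),
        (t T).2 ⟨γ, h⟩ = (t S).2 ⟨γ, h'⟩ := by
      intro T S γ h h'
      obtain ⟨R, e1, e2, _, _⟩ := hcomp T S
      rw [e1.2 γ h (lt_of_lt_of_le h e1.1), e2.2 γ h' (lt_of_lt_of_le h' e2.1)]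
    have hall : ∀ T S : D, t T ∈ (S : Set BNode.{u}) := by
      intro T S
      obtain ⟨R, e1, _, _, h2⟩ := hcomp T S
      exact mem_of_ext (hD S S.2).1 (h2 (ht R)) e1
    have hlenlt : ∀ T : D, (t T).1 < κ.ord := fun T => (hD T T.2).1.2.1 (t T) (ht T)
    -- a small index type for D
    obtain ⟨c, hcκ, hc⟩ := Cardinal.lt_lift_iff.{u, u + 1}.mp hcard
    haveI hDneT : Nonempty D := Set.Nonempty.to_subtype ⟨T0, hT0D⟩
    have hne0 : c ≠ 0 := by
      intro h0
      rw [h0, Cardinal.lift_zero] at hc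
      exact Cardinal.mk_ne_zero D hc.symm
    haveI hιne : Nonempty (Quotient.out c) := by
      refine Cardinal.mk_ne_zero_iff.mp ?_
      rw [Cardinal.mk_out]; exact hne0
    have hequiv : Nonempty (Quotient.out c ≃ D) := by
      refine Cardinal.lift_mk_eq'.{u, u + 1}.mp ?_
      rw [Cardinal.mk_out, hc, Cardinal.lift_id'.{u, u + 1}]
    obtain ⟨e⟩ := hequiv
    set f : Quotient.out c → Ordinal.{u} := fun i => (t (e i)).1 with hfdef
    have hι : Cardinal.mk (Quotient.out c) < κ.ord.cof := by
      rw [hreg.cof_eq, Cardinal.mk_out]; exact hcκ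
    have hα : iSup f < κ.ord := Ordinal.iSup_lt_ord hι (fun i => hlenlt (e i))
    set α := iSup f with hαdef
    have hle : ∀ T : D, (t T).1 ≤ α := by
      intro T
      have h1 := Ordinal.le_iSup f (e.symm T)
      simpa [hfdef] using h1
    by_cases hatt : ∃ T : D, (t T).1 = α
    · -- the supremum is attained
      obtain ⟨T1, hT1⟩ := hatt
      have hsplitAll : ∀ S : D, extOne (t T1) false ∈ (S : Set BNode.{u}) ∧
          extOne (t T1) true ∈ (S : Set BNode.{u}) := by
        intro S
        obtain ⟨R, e1, _, _, hR2⟩ := hcomp T1 S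
        have heq : t T1 = t R := ext_antisymm_len e1 (by rw [hT1]; exact hle R)
        rw [heq]
        exact ⟨hR2 (hsp R).1, hR2 (hsp R).2⟩
      exact ⟨t T1, Set.mem_sInter.mpr (fun S hS => hall T1 ⟨S, hS⟩), (hext T1).1,
        nrestrict_eq_of_ext (hext T1),
        Set.mem_sInter.mpr (fun S hS => (hsplitAll ⟨S, hS⟩).1),
        Set.mem_sInter.mpr (fun S hS => (hsplitAll ⟨S, hS⟩).2)⟩
    · -- the supremum is a limit of the lengths
      have hlt : ∀ T : D, (t T).1 < α := fun T =>
        lt_of_le_of_ne (hle T) (fun h => hatt ⟨T, h⟩)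
      have hα0 : α ≠ 0 := by
        intro h0
        exact absurd (hlt ⟨T0, hT0D⟩) (by rw [h0]; exact not_lt_zero)
      have hcov : ∀ β : Ordinal.{u}, β < α → ∃ T : D, β < (t T).1 := by
        intro β hβ
        by_contra hno
        push_neg at hno
        have hno' : ∀ i, f i ≤ β := fun i => hno (e i)
        exact absurd hβ (not_lt.mpr (ciSup_le hno'))
      have hlim : Order.IsSuccLimit α := by
        refine Ordinal.isSuccLimit_iff.mpr ⟨hα0, Order.isSuccPrelimit_of_succ_lt fun β hβ => ?_⟩
        obtain ⟨T, hT⟩ := hcov β hβ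
        exact lt_of_le_of_lt (Order.succ_le_of_lt hT) (hlt T)
      have hcov' : ∀ δ : {δ : Ordinal.{u} // δ < α}, ∃ T : D, δ.1 < (t T).1 :=
        fun δ => hcov δ.1 δ.2
      choose Tsel hTsel using hcov'
      let tstar : BNode.{u} := ⟨α, fun δ => (t (Tsel δ)).2 ⟨δ.1, hTsel δ⟩⟩
      have gval : ∀ (T : D) (δ : Ordinal.{u}) (h : δ < (t T).1) (h' : δ < α),
          tstar.2 ⟨δ, h'⟩ = (t T).2 ⟨δ, h⟩ :=
        fun T δ h h' => hvals (Tsel ⟨δ, h'⟩) T δ (hTsel ⟨δ, h'⟩) h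
      have hres : ∀ (T : D) (h : (t T).1 ≤ tstar.1),
          nrestrict tstar (t T).1 h = t T := by
        intro T h
        exact bnode_ext rfl (fun δ h1 h2 =>
          gval T δ h2 (lt_of_lt_of_le h1 h))
      have hmem : ∀ S ∈ D, tstar ∈ S := by
        intro S hS
        apply (hD S hS).2.1 tstar hα hlim
        intro β hβ
        obtain ⟨T, hT⟩ := hcov β hβ
        have hmemT : nrestrict (t T) β hT.le ∈ S :=
          (hD S hS).1.2.2 (t T) (hall T ⟨S, hS⟩) β hT.le
        have heq : nrestrict tstar β hβ.le = nrestrict (t T) β hT.le :=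
          bnode_ext rfl (fun δ h1 h2 =>
            gval T δ (lt_of_lt_of_le h2 hT.le) (lt_of_lt_of_le h1 hβ.le))
        rw [heq]; exact hmemT
      have hextS : Ext s tstar := by
        refine ⟨le_trans (hext ⟨T0, hT0D⟩).1 (hlt ⟨T0, hT0D⟩).le, ?_⟩
        intro γ hγ hγ'
        rw [(hext ⟨T0, hT0D⟩).2 γ hγ (lt_of_lt_of_le hγ (hext ⟨T0, hT0D⟩).1)]
        exact (gval ⟨T0, hT0D⟩ γ (lt_of_lt_of_le hγ (hext ⟨T0, hT0D⟩).1) hγ').symm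
      have hspS : ∀ S ∈ D, Splits S tstar := by
        intro S hS
        apply (hD S hS).2.2.2 tstar (hmem S hS) hlim
        intro β hβ
        obtain ⟨T, hT⟩ := hcov β hβ
        obtain ⟨R, e1, _, _, hRS⟩ := hcomp T ⟨S, hS⟩
        refine ⟨(t R).1, le_trans hT.le e1.1, hlt R, ?_⟩
        rw [hres R]
        exact ⟨hRS (hsp R).1, hRS (hsp R).2⟩
      exact ⟨tstar, Set.mem_sInter.mpr hmem, hextS.1, nrestrict_eq_of_ext hextS,
        Set.mem_sInter.mpr (fun S hS => (hspS S hS).1),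
        Set.mem_sInter.mpr (fun S hS => (hspS S hS).2)⟩
  · -- limit splitting
    intro u hu hlim hcof
    have hsplitT : ∀ T ∈ D, Splits T u := by
      intro T hT
      apply (hD T hT).2.2.2 u (Set.mem_sInter.mp hu T hT) hlim
      intro β hβ
      obtain ⟨γ', hβγ, hγ', hsp1, hsp2⟩ := hcof β hβ
      exact ⟨γ', hβγ, hγ', hsub T hT hsp1, hsub T hT hsp2⟩
    exact ⟨Set.mem_sInter.mpr fun T hT => (hsplitT T hT).1,
      Set.mem_sInter.mpr fun T hT => (hsplitT T hT).2⟩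


theorem sacks_directed_closed (κ : Cardinal.{u}) (hreg : κ.IsRegular)
    (hunc : Cardinal.aleph0 < κ)
    (D : Set (Set BNode.{u}))
    (hD : ∀ T ∈ D, IsSacks κ T)
    (hdir : ∀ T₁ ∈ D, ∀ T₂ ∈ D, ∃ T ∈ D, T ⊆ T₁ ∧ T ⊆ T₂)
    (hcard : Cardinal.mk D < Cardinal.lift.{u + 1} κ) :
    (∃ T : Set BNode.{u}, IsSacks κ T ∧ ∀ S ∈ D, T ⊆ S) ∧
    (D.Nonempty → IsSacks κ (⋂₀ D)) := by
  rcases D.eq_empty_or_nonempty with hDe | hDne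
  · subst hDe
    refine ⟨⟨{s : BNode.{u} | s.1 < κ.ord}, isSacks_full κ hreg.aleph0_le, ?_⟩, ?_⟩
    · intro S hS; exact absurd hS (Set.notMem_empty S)
    · intro h; exact absurd h Set.not_nonempty_empty
  · have key : IsSacks κ (⋂₀ D) := isSacks_sInter κ hreg D hD hdir hcard hDne
    exact ⟨⟨⋂₀ D, key, fun S hS => Set.sInter_subset_of_mem hS⟩, fun _ => key⟩

end Stmt8
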